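/- For every t ∈ ℝ, the translation map ψ_t(x) = x(·+t) on Δ is Lipschitz continuous with respect to the metric d, with Lipschitz constant 4^{⌈|t/h|⌉}; in particular d(ψ_t(x), ψ_t(y)) ≤ 4^{⌈|t/h|⌉}·d(x,y) for all x,y. -/

import Mathlib

open MeasureTheory
open scoped Classical

/-- Piecewise constant with some offset `τ ∈ [0, h)`: constant on each
`[n h + τ, (n+1) h + τ)`. -/
def PiecewiseConstOffset {V : Type*} (h : ℝ) (x : ℝ → V) : Prop :=
  ∃ τ : ℝ, 0 ≤ τ ∧ τ < h ∧ ∀ (n : ℤ) (s : ℝ),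
    s ∈ Set.Ico ((n : ℝ) * h + τ) (((n : ℝ) + 1) * h + τ) → x s = x ((n : ℝ) * h + τ)

/-- The metric in integral form:
`d(x,y) = (1/h) ∫_{-∞}^{∞} 4^{-|⌊t/h⌋|} χ(x(t) ≠ y(t)) dt`. -/
noncomputable def dInt {V : Type*} (h : ℝ) (x y : ℝ → V) : ℝ :=
  (1 / h) * ∫ t : ℝ, (1 / 4 ^ (⌊t / h⌋.natAbs) : ℝ) * (if x t = y t then (0 : ℝ) else 1)

/-- The translation `ψ_t(x) = x(· + t)`. -/
def psiFlow {V : Type*} (t : ℝ) (x : ℝ → V) : ℝ → V := fun s => x (s + t)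

/-- Floors move by at most `⌈|a|⌉` under translation by `a`. -/
lemma floor_translate_abs_le (u a : ℝ) : |⌊u + a⌋ - ⌊u⌋| ≤ ⌈|a|⌉ := by
  rw [abs_le]
  have hca : |a| ≤ (⌈|a|⌉ : ℝ) := Int.le_ceil _
  constructor
  · have h1 : u - (⌈|a|⌉ : ℝ) ≤ u + a := by
      have := neg_abs_le a; linarith
    have h2 := Int.floor_mono h1
    rw [Int.floor_sub_intCast] at h2
    linarith
  · have h1 : u + a ≤ u + (⌈|a|⌉ : ℝ) := by
      have := le_abs_self a; linarith
    have h2 := Int.floor_mono h1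
    rw [Int.floor_add_intCast] at h2
    linarith

/-- `exp (-b|s|)` is integrable on `ℝ` for `b > 0`. -/
lemma integrable_exp_neg_abs' {b : ℝ} (hb : 0 < b) :
    Integrable (fun s : ℝ => Real.exp (-b * |s|)) := by
  have hIoi : IntegrableOn (fun s : ℝ => Real.exp (-b * |s|)) (Set.Ioi 0) := by
    refine (exp_neg_integrableOn_Ioi 0 hb).congr_fun (fun s hs => ?_) measurableSet_Ioi
    rw [abs_of_pos hs]
  have hIic : IntegrableOn (fun s : ℝ => Real.exp (-b * |s|)) (Set.Iic 0) := by
    rw [← Measure.map_neg_eq_self (volume : Measure ℝ)]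
    have m : MeasurableEmbedding fun x : ℝ => -x := (Homeomorph.neg ℝ).measurableEmbedding
    rw [m.integrableOn_map_iff]
    simp_rw [Function.comp_def, abs_neg, Set.neg_preimage, Set.neg_Iic, neg_zero]
    exact Iff.mpr integrableOn_Ici_iff_integrableOn_Ioi hIoi
  have := hIic.union hIoi
  rwa [Set.Iic_union_Ioi, integrableOn_univ] at this

/-- The weight function `4^{-|⌊s/h⌋|}` is integrable. -/
lemma integrable_weight {h : ℝ} (hh : 0 < h) :
    Integrable (fun s : ℝ => (1 / 4 ^ (⌊s / h⌋.natAbs) : ℝ)) := by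
  have hmeas : Measurable (fun s : ℝ => (1 / 4 ^ (⌊s / h⌋.natAbs) : ℝ)) :=
    (measurable_of_countable (fun n : ℤ => (1 / 4 ^ n.natAbs : ℝ))).comp
      (Int.measurable_floor.comp (measurable_id.div_const h))
  have hlog : 0 < Real.log 4 := Real.log_pos (by norm_num)
  have hb : 0 < Real.log 4 / h := div_pos hlog hh
  refine ((integrable_exp_neg_abs' hb).const_mul 4).mono hmeas.aestronglyMeasurable ?_
  filter_upwards with s
  rw [Real.norm_eq_abs, Real.norm_eq_abs]
  set u := s / h with hu
  have key : (1 / 4 ^ (⌊u⌋.natAbs) : ℝ) ≤ 4 * Real.exp (-(Real.log 4 / h) * |s|) := by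
    have e1 : (1 / 4 ^ (⌊u⌋.natAbs) : ℝ) = Real.exp (-((⌊u⌋.natAbs : ℝ) * Real.log 4)) := by
      rw [Real.exp_neg, ← Real.log_pow, Real.exp_log (by positivity), one_div]
    have e2 : (4 : ℝ) * Real.exp (-(Real.log 4 / h) * |s|) =
        Real.exp (Real.log 4 + -(Real.log 4 / h) * |s|) := by
      rw [Real.exp_add, Real.exp_log (by norm_num)]
    rw [e1, e2]
    apply Real.exp_le_exp.mpr
    have hs_eq : |s| = |u| * h := by
      rw [hu, abs_div, abs_of_pos hh]; field_simp
    have hk : |u| - 1 ≤ (⌊u⌋.natAbs : ℝ) := by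
      rw [Nat.cast_natAbs, Int.cast_abs]
      have h1 : (⌊u⌋ : ℝ) ≤ u := Int.floor_le u
      have h2 : u < ⌊u⌋ + 1 := Int.lt_floor_add_one u
      rcases abs_cases u with ⟨hu1, hu2⟩ | ⟨hu1, hu2⟩ <;>
        rcases abs_cases ((⌊u⌋ : ℝ)) with ⟨hf1, hf2⟩ | ⟨hf1, hf2⟩ <;> linarith
    rw [hs_eq]
    have hre : -(Real.log 4 / h) * (|u| * h) = -(Real.log 4) * |u| := by
      field_simp
    rw [hre]
    nlinarith [mul_le_mul_of_nonneg_right hk hlog.le]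
  have h0 : (0 : ℝ) ≤ (1 / 4 ^ (⌊u⌋.natAbs) : ℝ) := by positivity
  have h0' : (0 : ℝ) ≤ 4 * Real.exp (-(Real.log 4 / h) * |s|) := by positivity
  rw [abs_of_nonneg h0, abs_of_nonneg h0']
  exact key

/-- A piecewise constant function takes its value at the canonical left endpoint. -/
lemma pc_canonical {V : Type*} {h : ℝ} (hh : 0 < h) {x : ℝ → V} {τ : ℝ}
    (hτ : ∀ (n : ℤ) (s : ℝ),
      s ∈ Set.Ico ((n : ℝ) * h + τ) (((n : ℝ) + 1) * h + τ) → x s = x ((n : ℝ) * h + τ))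
    (s : ℝ) : x s = x ((⌊(s - τ) / h⌋ : ℝ) * h + τ) := by
  apply hτ ⌊(s - τ) / h⌋ s
  constructor
  · have h1 : (⌊(s - τ) / h⌋ : ℝ) ≤ (s - τ) / h := Int.floor_le _
    have h2 : (⌊(s - τ) / h⌋ : ℝ) * h ≤ s - τ := by
      rw [← le_div_iff₀ hh]; exact h1
    linarith
  · have h1 : (s - τ) / h < (⌊(s - τ) / h⌋ : ℝ) + 1 := Int.lt_floor_add_one _
    have h2 : s - τ < ((⌊(s - τ) / h⌋ : ℝ) + 1) * h := by
      rw [← div_lt_iff₀ hh]; exact h1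
    linarith

/-- The disagreement indicator of two piecewise constant functions is measurable. -/
lemma measurable_indicator_ne {V : Type*} {h : ℝ} (hh : 0 < h) {x y : ℝ → V}
    (hx : PiecewiseConstOffset h x) (hy : PiecewiseConstOffset h y) :
    Measurable (fun s : ℝ => (if x s = y s then (0 : ℝ) else 1)) := by
  obtain ⟨τx, _, _, hτx⟩ := hx
  obtain ⟨τy, _, _, hτy⟩ := hy
  have heq : (fun s : ℝ => (if x s = y s then (0 : ℝ) else 1)) =
      (fun p : ℤ × ℤ =>
        if x ((p.1 : ℝ) * h + τx) = y ((p.2 : ℝ) * h + τy) then (0 : ℝ) else 1) ∘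
      (fun s : ℝ => (⌊(s - τx) / h⌋, ⌊(s - τy) / h⌋)) := by
    funext s
    simp only [Function.comp]
    rw [pc_canonical hh hτx s, pc_canonical hh hτy s]
  rw [heq]
  exact (measurable_of_countable _).comp
    ((Int.measurable_floor.comp ((measurable_id.sub_const τx).div_const h)).prodMk
      (Int.measurable_floor.comp ((measurable_id.sub_const τy).div_const h)))

/-- For every `t`, the translation `ψ_t` is Lipschitz with constant `4^{⌈|t/h|⌉}`:
`d(ψ_t x, ψ_t y) ≤ 4^{⌈|t/h|⌉} d(x, y)`. -/
theorem psi_lipschitz {V : Type*} [Fintype V] (h : ℝ) (hh : 0 < h) (t : ℝ)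
    (x y : ℝ → V) (hx : PiecewiseConstOffset h x) (hy : PiecewiseConstOffset h y) :
    dInt h (psiFlow t x) (psiFlow t y) ≤ (4 : ℝ) ^ (⌈|t / h|⌉ : ℤ) * dInt h x y := by
  classical
  set K : ℤ := ⌈|t / h|⌉ with hK
  set C : ℝ := (4 : ℝ) ^ K with hCdef
  set w : ℝ → ℝ := fun s => (1 / 4 ^ (⌊s / h⌋.natAbs) : ℝ) with hwdef
  set g : ℝ → ℝ := fun s => (if x s = y s then (0 : ℝ) else 1) with hgdef
  have hwmeas : Measurable w :=
    (measurable_of_countable (fun n : ℤ => (1 / 4 ^ n.natAbs : ℝ))).comp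
      (Int.measurable_floor.comp (measurable_id.div_const h))
  have hgmeas : Measurable g := measurable_indicator_ne hh hx hy
  have hw : Integrable w := integrable_weight hh
  have hwt : Integrable (fun s : ℝ => w (s - t)) := hw.comp_sub_right t
  have hwtmeas : Measurable (fun s : ℝ => w (s - t)) :=
    hwmeas.comp (measurable_id.sub_const t)
  have hg_bd : ∀ s, |g s| ≤ 1 := by
    intro s; simp only [hgdef]; split <;> simp
  have hg_nonneg : ∀ s, 0 ≤ g s := by
    intro s; simp only [hgdef]; split <;> norm_num
  have hw_nonneg : ∀ s, 0 ≤ w s := by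
    intro s; simp only [hwdef]; positivity
  -- integrability of the products
  have hint1 : Integrable (fun s : ℝ => w (s - t) * g s) := by
    refine hwt.mono (hwtmeas.mul hgmeas).aestronglyMeasurable ?_
    filter_upwards with s
    rw [Real.norm_eq_abs, Real.norm_eq_abs, abs_mul]
    calc |w (s - t)| * |g s| ≤ |w (s - t)| * 1 :=
          mul_le_mul_of_nonneg_left (hg_bd s) (abs_nonneg _)
      _ = |w (s - t)| := mul_one _
  have hint2 : Integrable (fun s : ℝ => w s * g s) := by
    refine hw.mono (hwmeas.mul hgmeas).aestronglyMeasurable ?_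
    filter_upwards with s
    rw [Real.norm_eq_abs, Real.norm_eq_abs, abs_mul]
    calc |w s| * |g s| ≤ |w s| * 1 :=
          mul_le_mul_of_nonneg_left (hg_bd s) (abs_nonneg _)
      _ = |w s| := mul_one _
  -- the pointwise weight inequality
  have hpt : ∀ s : ℝ, w (s - t) * g s ≤ C * (w s * g s) := by
    intro s
    have hw_ineq : w (s - t) ≤ C * w s := by
      have e1 : w (s - t) = (4 : ℝ) ^ (-(⌊(s - t) / h⌋.natAbs : ℤ)) := by
        simp only [hwdef]
        rw [zpow_neg, zpow_natCast, one_div]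
      have e2 : C * w s = (4 : ℝ) ^ (K + -(⌊s / h⌋.natAbs : ℤ)) := by
        simp only [hwdef, hCdef]
        rw [zpow_add₀ (by norm_num : (4 : ℝ) ≠ 0), zpow_neg, zpow_natCast, one_div]
      rw [e1, e2]
      apply zpow_le_zpow_right₀ (by norm_num : (1 : ℝ) ≤ 4)
      -- need : -a ≤ K + -b with a = |⌊(s-t)/h⌋|, b = |⌊s/h⌋|
      have hfl : |⌊(s - t) / h + t / h⌋ - ⌊(s - t) / h⌋| ≤ K := floor_translate_abs_le _ _
      have hsum : (s - t) / h + t / h = s / h := by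
        rw [← add_div, sub_add_cancel]
      rw [hsum] at hfl
      have h1 : (⌊s / h⌋.natAbs : ℤ) - (⌊(s - t) / h⌋.natAbs : ℤ) ≤ K := by
        rw [← Int.abs_eq_natAbs, ← Int.abs_eq_natAbs]
        calc |⌊s / h⌋| - |⌊(s - t) / h⌋| ≤ |⌊s / h⌋ - ⌊(s - t) / h⌋| :=
              abs_sub_abs_le_abs_sub _ _
          _ ≤ K := le_trans (le_abs_self _) (by rwa [abs_abs])
      omega
    calc w (s - t) * g s ≤ (C * w s) * g s :=
          mul_le_mul_of_nonneg_right hw_ineq (hg_nonneg s)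
      _ = C * (w s * g s) := by ring
  -- change of variables
  have step1 : (∫ s : ℝ, w s * g (s + t)) = ∫ s : ℝ, w (s - t) * g s := by
    have := integral_add_right_eq_self (μ := volume) (fun s : ℝ => w (s - t) * g s) t
    simp only [add_sub_cancel_right] at this
    exact this
  -- comparison
  have step2 : (∫ s : ℝ, w (s - t) * g s) ≤ ∫ s : ℝ, C * (w s * g s) :=
    integral_mono hint1 (hint2.const_mul C) hpt
  have step3 : (∫ s : ℝ, C * (w s * g s)) = C * ∫ s : ℝ, w s * g s :=
    integral_const_mul C _
  -- assemble
  have hLHS : dInt h (psiFlow t x) (psiFlow t y) = (1 / h) * ∫ s : ℝ, w s * g (s + t) := by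
    rfl
  have hRHS : dInt h x y = (1 / h) * ∫ s : ℝ, w s * g s := rfl
  rw [hLHS, hRHS, step1]
  have hhinv : (0 : ℝ) ≤ 1 / h := by positivity
  calc (1 / h) * ∫ s : ℝ, w (s - t) * g s
      ≤ (1 / h) * (C * ∫ s : ℝ, w s * g s) := by
        apply mul_le_mul_of_nonneg_left _ hhinv
        rw [← step3]; exact step2
    _ = C * ((1 / h) * ∫ s : ℝ, w s * g s) := by ring
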